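/- For x ≥ 0 and Z a Gaussian random variable with mean μ and variance σ², the tail probability satisfies √(2/π)·e^{-x²/2}/(x+√(x²+8/π)) ≥ P(Z > μ + xσ) ≥ √(2/π)·e^{-x²/2}/(x+√(x²+4)). -/

import Mathlib

open ProbabilityTheory Real MeasureTheory Filter Set Topology
open scoped ENNReal NNReal

noncomputable def gf (t : ℝ) : ℝ := (Real.sqrt (2 * π))⁻¹ * Real.exp (-t ^ 2 / 2)

noncomputable def gQ (x : ℝ) : ℝ := ((gaussianReal 0 1) (Set.Ioi x)).toReal

noncomputable def gh (c x : ℝ) : ℝ :=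
  Real.sqrt (2 / π) * Real.exp (-x ^ 2 / 2) / (x + Real.sqrt (x ^ 2 + c))

lemma gf_eq_pdf : gf = gaussianPDFReal 0 1 := by
  funext t
  simp only [gf, gaussianPDFReal, NNReal.coe_one, mul_one, sub_zero]

lemma integrable_gf : Integrable gf := gf_eq_pdf ▸ integrable_gaussianPDFReal 0 1

lemma integral_gf : ∫ t, gf t = 1 := by
  rw [gf_eq_pdf]; exact integral_gaussianPDFReal_eq_one 0 one_ne_zero

lemma continuous_gf : Continuous gf := by
  unfold gf; fun_prop

lemma gf_nonneg (t : ℝ) : 0 ≤ gf t := by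
  rw [gf_eq_pdf]; exact gaussianPDFReal_nonneg 0 1 t

lemma gQ_eq (x : ℝ) : gQ x = ∫ t in Set.Ioi x, gf t := by
  rw [gQ, gaussianReal_apply_eq_integral 0 one_ne_zero, ENNReal.toReal_ofReal, gf_eq_pdf]
  exact setIntegral_nonneg measurableSet_Ioi fun t _ => gaussianPDFReal_nonneg 0 1 t

lemma gQ_eq_Iic (x : ℝ) : gQ x = 1 - ∫ t in Set.Iic x, gf t := by
  rw [gQ_eq, eq_sub_iff_add_eq, add_comm]
  rw [intervalIntegral.integral_Iic_add_Ioi integrable_gf.integrableOn integrable_gf.integrableOn]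
  exact integral_gf

lemma gQ_sub (x y : ℝ) : gQ y = gQ 0 - ∫ t in (0:ℝ)..y, gf t := by
  rw [gQ_eq_Iic, gQ_eq_Iic, ← intervalIntegral.integral_Iic_sub_Iic
    integrable_gf.integrableOn integrable_gf.integrableOn]
  ring

lemma hasDerivAt_gQ (x : ℝ) : HasDerivAt gQ (-(gf x)) x := by
  have h1 : HasDerivAt (fun y => ∫ t in (0:ℝ)..y, gf t) (gf x) x :=
    intervalIntegral.integral_hasDerivAt_right
      (integrable_gf.intervalIntegrable)
      (continuous_gf.stronglyMeasurableAtFilter _ _)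
      continuous_gf.continuousAt
  have h2 : HasDerivAt (fun y => gQ 0 - ∫ t in (0:ℝ)..y, gf t) (0 - gf x) x :=
    (hasDerivAt_const _ _).sub h1
  rw [zero_sub] at h2
  convert h2 using 1
  funext y
  exact gQ_sub x y

lemma continuous_gQ : Continuous gQ :=
  continuous_iff_continuousAt.2 fun x => (hasDerivAt_gQ x).continuousAt

lemma tendsto_gQ : Tendsto gQ atTop (𝓝 0) := by
  have hm : ∀ x : ℝ, gQ x = 1 - ((gaussianReal 0 1) (Set.Iic x)).toReal := by
    intro x
    have hc : (gaussianReal 0 1) (Set.Ioi x) = 1 - (gaussianReal 0 1) (Set.Iic x) := by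
      rw [← Set.compl_Iic, measure_compl measurableSet_Iic (measure_ne_top _ _),
        measure_univ]
    rw [gQ, hc, ENNReal.toReal_sub_of_le prob_le_one (by simp)]
    simp
  have h1 : Tendsto (fun x : ℝ => ((gaussianReal 0 1) (Set.Iic x)).toReal) atTop (𝓝 1) := by
    have := tendsto_measure_Iic_atTop (gaussianReal 0 1)
    rw [measure_univ] at this
    have h2 := (ENNReal.tendsto_toReal (by norm_num : (1:ℝ≥0∞) ≠ ⊤)).comp this
    exact h2
  have h3 := h1.const_sub 1
  simp only [sub_self] at h3
  exact h3.congr fun x => (hm x).symm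

lemma gQ_zero : gQ 0 = 1 / 2 := by
  have hIoi : ∫ t in Set.Ioi (0:ℝ), gf t = ∫ t in Set.Iic (0:ℝ), gf t := by
    have := integral_comp_neg_Ioi (0:ℝ) gf
    rw [neg_zero] at this
    rw [← this]
    congr 1
    funext t
    simp [gf, neg_pow]
  have htot : (∫ t in Set.Iic (0:ℝ), gf t) + ∫ t in Set.Ioi (0:ℝ), gf t = 1 := by
    rw [intervalIntegral.integral_Iic_add_Ioi integrable_gf.integrableOn
      integrable_gf.integrableOn]
    exact integral_gf
  rw [gQ_eq]
  linarith

lemma inv_sqrt_two_pi : (Real.sqrt (2 * π))⁻¹ = Real.sqrt (2 / π) / 2 := by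
  have hπ : 0 < Real.sqrt π := Real.sqrt_pos.2 pi_pos
  have h2 : (0:ℝ) < Real.sqrt 2 := Real.sqrt_pos.2 (by norm_num)
  rw [Real.sqrt_mul (by norm_num : (0:ℝ) ≤ 2), Real.sqrt_div (by norm_num : (0:ℝ) ≤ 2)]
  have hs2 : Real.sqrt 2 * Real.sqrt 2 = 2 := Real.mul_self_sqrt (by norm_num)
  field_simp
  nlinarith [hs2, hπ.le, h2.le]

lemma gf_eq (x : ℝ) : gf x = Real.sqrt (2 / π) / 2 * Real.exp (-x ^ 2 / 2) := by
  rw [gf, inv_sqrt_two_pi]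

lemma sqrt_gt_abs {c x : ℝ} (hc : 0 < c) : |x| < Real.sqrt (x ^ 2 + c) := by
  have : |x| = Real.sqrt (x ^ 2) := by rw [Real.sqrt_sq_eq_abs]
  rw [this]
  exact Real.sqrt_lt_sqrt (sq_nonneg x) (by linarith)

lemma denom_pos {c x : ℝ} (hc : 0 < c) : 0 < x + Real.sqrt (x ^ 2 + c) := by
  have h := sqrt_gt_abs (x := x) hc
  have := neg_abs_le x
  linarith

lemma hasDerivAt_gh (c : ℝ) (hc : 0 < c) (x : ℝ) :
    HasDerivAt (gh c)
      ((Real.sqrt (2 / π) * (Real.exp (-x ^ 2 / 2) * (-x)) * (x + Real.sqrt (x ^ 2 + c)) -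
          Real.sqrt (2 / π) * Real.exp (-x ^ 2 / 2) * (1 + x / Real.sqrt (x ^ 2 + c))) /
        (x + Real.sqrt (x ^ 2 + c)) ^ 2) x := by
  have hs : 0 < Real.sqrt (x ^ 2 + c) := Real.sqrt_pos.2 (by positivity)
  have hd : 0 < x + Real.sqrt (x ^ 2 + c) := denom_pos hc
  have hinner : HasDerivAt (fun y : ℝ => -y ^ 2 / 2) (-x) x := by
    have h1 : HasDerivAt (fun y : ℝ => y ^ 2) (2 * x) x := by
      simpa using hasDerivAt_pow 2 x
    have h2 := (h1.neg).div_const 2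
    refine h2.congr_deriv ?_
    ring
  have hnum : HasDerivAt (fun y : ℝ => Real.sqrt (2 / π) * Real.exp (-y ^ 2 / 2))
      (Real.sqrt (2 / π) * (Real.exp (-x ^ 2 / 2) * (-x))) x := (hinner.exp).const_mul _
  have hsq : HasDerivAt (fun y : ℝ => Real.sqrt (y ^ 2 + c)) (x / Real.sqrt (x ^ 2 + c)) x := by
    have h1 : HasDerivAt (fun y : ℝ => y ^ 2 + c) (2 * x) x := by
      simpa using (hasDerivAt_pow 2 x).add_const c
    have h2 := (Real.hasDerivAt_sqrt (by positivity : x ^ 2 + c ≠ 0)).comp x h1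
    refine h2.congr_deriv ?_
    field_simp
  have hden : HasDerivAt (fun y : ℝ => y + Real.sqrt (y ^ 2 + c))
      (1 + x / Real.sqrt (x ^ 2 + c)) x := (hasDerivAt_id x).add hsq
  exact hnum.div hden hd.ne'

lemma tendsto_gh (c : ℝ) : Tendsto (gh c) atTop (𝓝 0) := by
  have hnum : Tendsto (fun x : ℝ => Real.sqrt (2 / π) * Real.exp (-x ^ 2 / 2)) atTop (𝓝 0) := by
    have h1 : Tendsto (fun x : ℝ => -x ^ 2 / 2) atTop atBot := by
      have h2 : Tendsto (fun x : ℝ => x ^ 2) atTop atTop :=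
        tendsto_pow_atTop two_ne_zero
      have h3 : Tendsto (fun x : ℝ => x ^ 2 / 2) atTop atTop :=
        h2.atTop_div_const (by norm_num)
      have h4 := tendsto_neg_atTop_atBot.comp h3
      refine h4.congr fun x => ?_
      simp [neg_div]
    have := Real.tendsto_exp_atBot.comp h1
    simpa using (this.const_mul (Real.sqrt (2 / π)))
  have hden : Tendsto (fun x : ℝ => x + Real.sqrt (x ^ 2 + c)) atTop atTop :=
    tendsto_atTop_mono (fun x => le_add_of_nonneg_right (Real.sqrt_nonneg _)) tendsto_id
  exact hnum.div_atTop hden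

lemma combo_eq {c x : ℝ} (hc : 0 < c) :
    gf x + (Real.sqrt (2 / π) * (Real.exp (-x ^ 2 / 2) * (-x)) * (x + Real.sqrt (x ^ 2 + c)) -
          Real.sqrt (2 / π) * Real.exp (-x ^ 2 / 2) * (1 + x / Real.sqrt (x ^ 2 + c))) /
        (x + Real.sqrt (x ^ 2 + c)) ^ 2 =
      Real.sqrt (2 / π) * Real.exp (-x ^ 2 / 2) *
        ((c - 2) * Real.sqrt (x ^ 2 + c) - 2 * x) /
        (2 * Real.sqrt (x ^ 2 + c) * (x + Real.sqrt (x ^ 2 + c)) ^ 2) := by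
  have hs : 0 < Real.sqrt (x ^ 2 + c) := Real.sqrt_pos.2 (by positivity)
  have hsq : Real.sqrt (x ^ 2 + c) ^ 2 = x ^ 2 + c := Real.sq_sqrt (by positivity)
  have hd : 0 < x + Real.sqrt (x ^ 2 + c) := denom_pos hc
  rw [gf_eq]
  set s := Real.sqrt (x ^ 2 + c) with hs_def
  have hc' : c = s ^ 2 - x ^ 2 := by linarith
  rw [hc']
  field_simp
  ring

lemma deriv_combo_ge {c x : ℝ} (hc : 0 < c)
    (hkey : 2 * x ≤ (c - 2) * Real.sqrt (x ^ 2 + c)) :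
    -((Real.sqrt (2 / π) * (Real.exp (-x ^ 2 / 2) * (-x)) * (x + Real.sqrt (x ^ 2 + c)) -
          Real.sqrt (2 / π) * Real.exp (-x ^ 2 / 2) * (1 + x / Real.sqrt (x ^ 2 + c))) /
        (x + Real.sqrt (x ^ 2 + c)) ^ 2) ≤ gf x := by
  rw [neg_le, ← sub_nonneg, sub_neg_eq_add, add_comm]
  rw [combo_eq hc]
  have hs : 0 < Real.sqrt (x ^ 2 + c) := Real.sqrt_pos.2 (by positivity)
  have hd : 0 < x + Real.sqrt (x ^ 2 + c) := denom_pos hc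
  have hA : 0 < Real.sqrt (2 / π) := Real.sqrt_pos.2 (by positivity)
  have he : 0 < Real.exp (-x ^ 2 / 2) := Real.exp_pos _
  have hnum : 0 ≤ (c - 2) * Real.sqrt (x ^ 2 + c) - 2 * x := by linarith
  positivity

lemma deriv_combo_le {c x : ℝ} (hc : 0 < c)
    (hkey : (c - 2) * Real.sqrt (x ^ 2 + c) ≤ 2 * x) :
    gf x ≤ -((Real.sqrt (2 / π) * (Real.exp (-x ^ 2 / 2) * (-x)) * (x + Real.sqrt (x ^ 2 + c)) -
          Real.sqrt (2 / π) * Real.exp (-x ^ 2 / 2) * (1 + x / Real.sqrt (x ^ 2 + c))) /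
        (x + Real.sqrt (x ^ 2 + c)) ^ 2) := by
  have hs : 0 < Real.sqrt (x ^ 2 + c) := Real.sqrt_pos.2 (by positivity)
  have hd : 0 < x + Real.sqrt (x ^ 2 + c) := denom_pos hc
  have hA : 0 < Real.sqrt (2 / π) := Real.sqrt_pos.2 (by positivity)
  have he : 0 < Real.exp (-x ^ 2 / 2) := Real.exp_pos _
  have h2 : gf x + (Real.sqrt (2 / π) * (Real.exp (-x ^ 2 / 2) * (-x)) *
        (x + Real.sqrt (x ^ 2 + c)) -
          Real.sqrt (2 / π) * Real.exp (-x ^ 2 / 2) * (1 + x / Real.sqrt (x ^ 2 + c))) /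
        (x + Real.sqrt (x ^ 2 + c)) ^ 2 ≤ 0 := by
    rw [combo_eq hc]
    apply div_nonpos_of_nonpos_of_nonneg
    · apply mul_nonpos_of_nonneg_of_nonpos (by positivity)
      linarith
    · positivity
  linarith

lemma lower_bound {x : ℝ} (hx : 0 ≤ x) : gh 4 x ≤ gQ x := by
  set F : ℝ → ℝ := fun y => gQ y - gh 4 y with hF
  have hder : ∀ y : ℝ, HasDerivAt F
      (-(gf y) - ((Real.sqrt (2 / π) * (Real.exp (-y ^ 2 / 2) * (-y)) *
        (y + Real.sqrt (y ^ 2 + 4)) -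
          Real.sqrt (2 / π) * Real.exp (-y ^ 2 / 2) * (1 + y / Real.sqrt (y ^ 2 + 4))) /
        (y + Real.sqrt (y ^ 2 + 4)) ^ 2)) y := fun y =>
    (hasDerivAt_gQ y).sub (hasDerivAt_gh 4 (by norm_num) y)
  have hanti : AntitoneOn F (Set.Ici 0) := by
    apply antitoneOn_of_deriv_nonpos (convex_Ici 0)
    · exact fun y _ => ((hder y).continuousAt).continuousWithinAt
    · intro y hy
      exact ((hder y).differentiableAt).differentiableWithinAt
    · intro y hy
      rw [interior_Ici] at hy
      rw [(hder y).deriv]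
      have hkey : 2 * y ≤ (4 - 2) * Real.sqrt (y ^ 2 + 4) := by
        have h1 : y ≤ Real.sqrt (y ^ 2 + 4) := le_trans (le_abs_self y)
          (sqrt_gt_abs (by norm_num)).le
        linarith
      have := deriv_combo_ge (by norm_num : (0:ℝ) < 4) hkey
      linarith
  have ht : Tendsto F atTop (𝓝 0) := by
    simpa using tendsto_gQ.sub (tendsto_gh 4)
  have h0 : 0 ≤ F x := by
    refine le_of_tendsto ht ?_
    filter_upwards [eventually_ge_atTop x] with y hy
    exact hanti (Set.mem_Ici.2 hx) (Set.mem_Ici.2 (hx.trans hy)) hy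
  simpa [hF] using h0

lemma c0_facts : 2 < 8 / π ∧ 8 / π < 4 := by
  have h1 : 2 < π := by linarith [Real.pi_gt_three]
  have h2 : π < 4 := by linarith [Real.pi_lt_d2]
  constructor
  · rw [lt_div_iff₀ Real.pi_pos]; linarith
  · rw [div_lt_iff₀ Real.pi_pos]; linarith

lemma gh_c0_zero : gh (8 / π) 0 = 1 / 2 := by
  have hπ : 0 < π := Real.pi_pos
  have h8 : 0 < 8 / π := by positivity
  rw [gh, show -(0:ℝ) ^ 2 / 2 = 0 by norm_num, Real.exp_zero, mul_one,
    show (0:ℝ) ^ 2 + 8 / π = 8 / π by ring, zero_add,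
    ← Real.sqrt_div (by positivity) (8 / π)]
  have : (2 / π) / (8 / π) = 1 / 4 := by field_simp; ring
  rw [this, show (1:ℝ)/4 = (1/2)^2 by norm_num, Real.sqrt_sq (by norm_num)]

lemma upper_bound {x : ℝ} (hx : 0 ≤ x) : gQ x ≤ gh (8 / π) x := by
  obtain ⟨hc2, hc4⟩ := c0_facts
  set c : ℝ := 8 / π with hc_def
  have hc : 0 < c := by positivity
  set K : ℝ := (c - 2) ^ 2 * c / (4 - (c - 2) ^ 2) with hK_def
  have hden4 : 0 < 4 - (c - 2) ^ 2 := by nlinarith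
  have hK : 0 < K := div_pos (mul_pos (pow_pos (by linarith) 2) hc) hden4
  set x₀ : ℝ := Real.sqrt K with hx0_def
  have hx0 : 0 < x₀ := Real.sqrt_pos.2 hK
  have hx0sq : x₀ ^ 2 = K := Real.sq_sqrt hK.le
  set G : ℝ → ℝ := fun y => gh c y - gQ y with hG
  have hder : ∀ y : ℝ, HasDerivAt G
      (((Real.sqrt (2 / π) * (Real.exp (-y ^ 2 / 2) * (-y)) *
        (y + Real.sqrt (y ^ 2 + c)) -
          Real.sqrt (2 / π) * Real.exp (-y ^ 2 / 2) * (1 + y / Real.sqrt (y ^ 2 + c))) /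
        (y + Real.sqrt (y ^ 2 + c)) ^ 2) - (-(gf y))) y := fun y =>
    (hasDerivAt_gh c hc y).sub (hasDerivAt_gQ y)
  have hG0 : G 0 = 0 := by
    simp only [hG]
    rw [gh_c0_zero, gQ_zero]
    ring
  -- case split on x ≤ x₀
  rcases le_or_gt x x₀ with hcase | hcase
  · -- monotone on [0, x₀]
    have hmono : MonotoneOn G (Set.Icc 0 x₀) := by
      apply monotoneOn_of_deriv_nonneg (convex_Icc 0 x₀)
      · exact fun y _ => ((hder y).continuousAt).continuousWithinAt
      · intro y hy
        exact ((hder y).differentiableAt).differentiableWithinAt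
      · intro y hy
        rw [interior_Icc] at hy
        rw [(hder y).deriv]
        have hy0 : 0 ≤ y := hy.1.le
        have hs : 0 < Real.sqrt (y ^ 2 + c) := Real.sqrt_pos.2 (by positivity)
        have hsq : Real.sqrt (y ^ 2 + c) ^ 2 = y ^ 2 + c := Real.sq_sqrt (by positivity)
        have hy2 : y ^ 2 ≤ K := by
          have := hy.2.le
          nlinarith [hx0sq, hx0.le]
        have hkey : 2 * y ≤ (c - 2) * Real.sqrt (y ^ 2 + c) := by
          have h4 : 4 * y ^ 2 ≤ (c - 2) ^ 2 * (y ^ 2 + c) := by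
            rw [hK_def, le_div_iff₀ hden4] at hy2
            nlinarith
          nlinarith [mul_pos (by linarith : (0:ℝ) < c - 2) hs, sq_nonneg
            ((c - 2) * Real.sqrt (y ^ 2 + c) - 2 * y)]
        have := deriv_combo_ge hc hkey
        linarith
    have := hmono (Set.mem_Icc.2 ⟨le_refl 0, hx0.le⟩) (Set.mem_Icc.2 ⟨hx, hcase⟩) hx
    rw [hG0] at this
    simpa [hG] using this
  · -- antitone on [x₀, ∞)
    have hanti : AntitoneOn G (Set.Ici x₀) := by
      apply antitoneOn_of_deriv_nonpos (convex_Ici x₀)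
      · exact fun y _ => ((hder y).continuousAt).continuousWithinAt
      · intro y hy
        exact ((hder y).differentiableAt).differentiableWithinAt
      · intro y hy
        rw [interior_Ici] at hy
        have hy0 : 0 ≤ y := hx0.le.trans hy.le
        rw [(hder y).deriv]
        have hs : 0 < Real.sqrt (y ^ 2 + c) := Real.sqrt_pos.2 (by positivity)
        have hsq : Real.sqrt (y ^ 2 + c) ^ 2 = y ^ 2 + c := Real.sq_sqrt (by positivity)
        have hy2 : K ≤ y ^ 2 := by
          nlinarith [hx0sq, hx0.le, (Set.mem_Ioi.1 hy).le]
        have hkey : (c - 2) * Real.sqrt (y ^ 2 + c) ≤ 2 * y := by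
          have h4 : (c - 2) ^ 2 * (y ^ 2 + c) ≤ 4 * y ^ 2 := by
            rw [hK_def, div_le_iff₀ hden4] at hy2
            nlinarith
          nlinarith [mul_pos (by linarith : (0:ℝ) < c - 2) hs, sq_nonneg
            ((c - 2) * Real.sqrt (y ^ 2 + c) + 2 * y)]
        have := deriv_combo_le hc hkey
        linarith
    have ht : Tendsto G atTop (𝓝 0) := by
      simpa using (tendsto_gh c).sub tendsto_gQ
    have h0 : 0 ≤ G x := by
      refine le_of_tendsto ht ?_
      filter_upwards [eventually_ge_atTop x] with y hy
      exact hanti (Set.mem_Ici.2 hcase.le) (Set.mem_Ici.2 (hcase.le.trans hy)) hy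
    simpa [hG] using h0

lemma measure_reduction (μ σ x : ℝ) (hσ : 0 < σ) :
    ((gaussianReal μ (Real.toNNReal (σ ^ 2))) {z | μ + x * σ < z}).toReal = gQ x := by
  have hmap : gaussianReal μ (Real.toNNReal (σ ^ 2)) =
      Measure.map (fun z => σ * z + μ) (gaussianReal 0 1) := by
    have h1 : (fun z : ℝ => σ * z + μ) = (· + μ) ∘ (σ * ·) := rfl
    rw [h1, ← Measure.map_map (measurable_add_const μ) (measurable_const_mul σ),
      gaussianReal_map_const_mul σ, gaussianReal_map_add_const μ]
    congr 1
    · ring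
    · ext
      simp [Real.coe_toNNReal _ (sq_nonneg σ)]
  rw [hmap, Measure.map_apply (by fun_prop)
    (show MeasurableSet {z : ℝ | μ + x * σ < z} from measurableSet_Ioi)]
  have hpre : (fun z => σ * z + μ) ⁻¹' {z | μ + x * σ < z} = Set.Ioi x := by
    ext z
    simp only [Set.mem_preimage, Set.mem_setOf_eq, Set.mem_Ioi]
    constructor
    · intro h; nlinarith
    · intro h; nlinarith
  rw [hpre, gQ]

/-- Gaussian tail bound (Abramowitz–Stegun type): for `x ≥ 0` and `Z ~ N(μ, σ²)`,
`√(2/π)·e^{-x²/2}/(x+√(x²+8/π)) ≥ P(Z > μ + xσ) ≥ √(2/π)·e^{-x²/2}/(x+√(x²+4))`. -/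
theorem stmt0 (μ σ x : ℝ) (hσ : 0 < σ) (hx : 0 ≤ x) :
    Real.sqrt (2 / π) * Real.exp (-x ^ 2 / 2) / (x + Real.sqrt (x ^ 2 + 8 / π)) ≥
      ((gaussianReal μ (Real.toNNReal (σ ^ 2))) {z | μ + x * σ < z}).toReal ∧
    ((gaussianReal μ (Real.toNNReal (σ ^ 2))) {z | μ + x * σ < z}).toReal ≥
      Real.sqrt (2 / π) * Real.exp (-x ^ 2 / 2) / (x + Real.sqrt (x ^ 2 + 4)) := by
  rw [measure_reduction μ σ x hσ]
  exact ⟨upper_bound hx, lower_bound hx⟩
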